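/- Let H be an n×n real symmetric positive definite matrix, let α ∈ (0,1), and let k₁ > 0. Then for all z, g ∈ ℝⁿ with z ≠ g, zᵀ(z − g) / ‖H⁻¹(z − g)‖^{α} ≤ (k₁/(2−α)) · λ_max(H)^{2−α} · ‖z‖^{2−α} + ((1−α)/(2−α)) · k₁^{−1/(1−α)} · λ_min(H)^{α−2} · ‖z − g‖^{2−α}. -/

import Mathlib

open scoped InnerProductSpace

/-- Matrix-vector multiplication viewed as a map on Euclidean space. -/
noncomputable def mulVecE {n : ℕ} (H : Matrix (Fin n) (Fin n) ℝ)
    (w : EuclideanSpace ℝ (Fin n)) : EuclideanSpace ℝ (Fin n) :=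
  (EuclideanSpace.equiv (Fin n) ℝ).symm (H.mulVec (EuclideanSpace.equiv (Fin n) ℝ w))

lemma norm_mulVecE_le {n : ℕ} {H : Matrix (Fin n) (Fin n) ℝ} (hH : H.PosDef) {c : ℝ}
    (hc : ∀ i, hH.1.eigenvalues i ≤ c) (hc0 : 0 ≤ c) (v : EuclideanSpace ℝ (Fin n)) :
    ‖mulVecE H v‖ ≤ c * ‖v‖ := by
  set b := hH.1.eigenvectorBasis with hb
  have hsymm : (Matrix.toEuclideanLin H).IsSymmetric :=
    Matrix.isHermitian_iff_isSymmetric.mp hH.1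
  have heig : ∀ i, Matrix.toEuclideanLin H (b i) = hH.1.eigenvalues i • b i := by
    intro i
    apply PiLp.ext
    intro j
    exact congrFun (hH.1.mulVec_eigenvectorBasis i) j
  have hrepr : ∀ i, b.repr (mulVecE H v) i = hH.1.eigenvalues i * b.repr v i := by
    intro i
    rw [show mulVecE H v = Matrix.toEuclideanLin H v from rfl]
    rw [b.repr_apply_apply, b.repr_apply_apply, ← hsymm (b i) v, heig i,
      real_inner_smul_left]
  have h1 : ‖mulVecE H v‖ = ‖b.repr (mulVecE H v)‖ := (b.repr.norm_map _).symm
  have h2 : ‖v‖ = ‖b.repr v‖ := (b.repr.norm_map _).symm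
  rw [h1, h2, EuclideanSpace.norm_eq, EuclideanSpace.norm_eq]
  rw [← Real.sqrt_sq hc0, ← Real.sqrt_mul (sq_nonneg c)]
  apply Real.sqrt_le_sqrt
  rw [Finset.mul_sum]
  apply Finset.sum_le_sum
  intro i _
  rw [hrepr i]
  have h0 : 0 ≤ hH.1.eigenvalues i := le_of_lt (hH.eigenvalues_pos i)
  rw [Real.norm_eq_abs, Real.norm_eq_abs, abs_mul, mul_pow]
  have habs : |hH.1.eigenvalues i| ≤ c := by rw [abs_of_nonneg h0]; exact hc i
  gcongr


theorem stmt6 (n : ℕ) (H : Matrix (Fin n) (Fin n) ℝ) (hH : H.PosDef)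
    (lammin lammax : ℝ)
    (hminmem : ∃ i, hH.1.eigenvalues i = lammin)
    (hmin : ∀ i, lammin ≤ hH.1.eigenvalues i)
    (hmaxmem : ∃ i, hH.1.eigenvalues i = lammax)
    (hmax : ∀ i, hH.1.eigenvalues i ≤ lammax)
    (α : ℝ) (hα0 : 0 < α) (hα1 : α < 1) (k₁ : ℝ) (hk₁ : 0 < k₁)
    (z g : EuclideanSpace ℝ (Fin n)) (hzg : z ≠ g) :
    ⟪z, z - g⟫_ℝ / ‖mulVecE H⁻¹ (z - g)‖ ^ α ≤
      k₁ / (2 - α) * lammax ^ (2 - α) * ‖z‖ ^ (2 - α) +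
        (1 - α) / (2 - α) * k₁ ^ (-(1 / (1 - α))) * lammin ^ (α - 2) * ‖z - g‖ ^ (2 - α) := by
  obtain ⟨i₀, hi₀⟩ := hminmem
  obtain ⟨i₁, hi₁⟩ := hmaxmem
  have hlmin : 0 < lammin := hi₀ ▸ hH.eigenvalues_pos i₀
  have hlmax : 0 < lammax := hi₁ ▸ hH.eigenvalues_pos i₁
  have hml : lammin ≤ lammax := hi₁ ▸ hmin i₁
  set u : EuclideanSpace ℝ (Fin n) := z - g with hu
  have hu0 : u ≠ 0 := sub_ne_zero.mpr hzg
  have hN : (0:ℝ) < ‖u‖ := norm_pos_iff.mpr hu0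
  have hZ : (0:ℝ) ≤ ‖z‖ := norm_nonneg z
  -- H * (H⁻¹ u) = u
  have hdet : IsUnit H.det := isUnit_iff_ne_zero.mpr hH.det_pos.ne'
  have hHinv : mulVecE H (mulVecE H⁻¹ u) = u := by
    apply PiLp.ext
    intro j
    show (H.mulVec (H⁻¹.mulVec u)) j = u j
    rw [Matrix.mulVec_mulVec, Matrix.mul_nonsing_inv H hdet, Matrix.one_mulVec]
  have hα2 : (0:ℝ) < 2 - α := by linarith
  have h1α : (0:ℝ) < 1 - α := by linarith
  set D := ‖mulVecE H⁻¹ u‖ with hD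
  have hD0 : 0 < D := by
    rw [hD, norm_pos_iff]
    intro h
    rw [h] at hHinv
    apply hu0
    rw [← hHinv]
    apply PiLp.ext
    intro j
    show (H.mulVec 0) j = (0 : EuclideanSpace ℝ (Fin n)) j
    rw [Matrix.mulVec_zero]; rfl
  have hDge : ‖u‖ / lammax ≤ D := by
    rw [div_le_iff₀ hlmax, mul_comm]
    calc ‖u‖ = ‖mulVecE H (mulVecE H⁻¹ u)‖ := by rw [hHinv]
    _ ≤ lammax * D := norm_mulVecE_le hH hmax hlmax.le _
  have hq0 : (0:ℝ) < ‖u‖/lammax := div_pos hN hlmax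
  -- step 1 and 2
  have step12 : ⟪z, u⟫_ℝ / D ^ α ≤ ‖z‖ * ‖u‖ / (‖u‖/lammax) ^ α := by
    calc ⟪z, u⟫_ℝ / D ^ α ≤ ‖z‖ * ‖u‖ / D ^ α := by
          gcongr
          exact real_inner_le_norm z u
    _ ≤ ‖z‖ * ‖u‖ / (‖u‖/lammax) ^ α := by
          gcongr
  -- step 3 : rewrite
  have step3 : ‖z‖ * ‖u‖ / (‖u‖/lammax) ^ α
      = (lammax * ‖z‖) * (lammax ^ (α-1) * ‖u‖ ^ (1-α)) := by
    rw [Real.div_rpow hN.le hlmax.le, Real.rpow_sub hN, Real.rpow_one,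
      Real.rpow_sub hlmax, Real.rpow_one]
    have h1 : ‖u‖ ^ α ≠ 0 := (Real.rpow_pos_of_pos hN α).ne'
    have h2 : lammax ^ α ≠ 0 := (Real.rpow_pos_of_pos hlmax α).ne'
    field_simp
  -- Young
  set p : ℝ := 2 - α with hp
  set q : ℝ := (2 - α) / (1 - α) with hqdef
  have hpq : p.HolderConjugate q := by
    refine (Real.holderConjugate_iff_eq_conjExponent (by rw [hp]; linarith)).mpr ?_
    rw [hqdef, hp]; congr 1; ring
  set a : ℝ := lammax * ‖z‖ with ha
  set b : ℝ := lammax ^ (α-1) * ‖u‖ ^ (1-α) with hbdef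
  have ha0 : 0 ≤ a := mul_nonneg hlmax.le hZ
  have hb0 : 0 ≤ b := mul_nonneg (Real.rpow_nonneg hlmax.le _) (Real.rpow_nonneg hN.le _)
  set e : ℝ := (2 - α)⁻¹ with he
  have hsplit : a * b = (k₁ ^ e * a) * (k₁ ^ (-e) * b) := by
    have h : k₁ ^ e * k₁ ^ (-e) = 1 := by
      rw [← Real.rpow_add hk₁]; simp
    calc a * b = (k₁ ^ e * k₁ ^ (-e)) * (a * b) := by rw [h, one_mul]
    _ = (k₁ ^ e * a) * (k₁ ^ (-e) * b) := by ring
  have hyoung : (k₁ ^ e * a) * (k₁ ^ (-e) * b)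
      ≤ (k₁ ^ e * a) ^ p / p + (k₁ ^ (-e) * b) ^ q / q :=
    Real.young_inequality_of_nonneg
      (mul_nonneg (Real.rpow_nonneg hk₁.le _) ha0)
      (mul_nonneg (Real.rpow_nonneg hk₁.le _) hb0) hpq
  -- simplify the two terms
  have hterm1 : (k₁ ^ e * a) ^ p / p = k₁ / (2-α) * lammax ^ (2-α) * ‖z‖ ^ (2-α) := by
    rw [Real.mul_rpow (Real.rpow_nonneg hk₁.le _) ha0,
      ← Real.rpow_mul hk₁.le, Real.mul_rpow hlmax.le hZ]
    rw [show e * p = 1 by rw [he, hp]; exact inv_mul_cancel₀ (ne_of_gt (by linarith)), Real.rpow_one, hp]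
    ring
  have hq1 : (0:ℝ) < q := by rw [hqdef]; positivity
  have hterm2 : (k₁ ^ (-e) * b) ^ q / q
      ≤ (1-α)/(2-α) * k₁ ^ (-(1/(1-α))) * lammin ^ (α-2) * ‖u‖ ^ (2-α) := by
    have h1 : (k₁ ^ (-e) * b) ^ q
        = k₁ ^ (-(1/(1-α))) * (lammax ^ (α-2) * ‖u‖ ^ (2-α)) := by
      rw [hbdef, Real.mul_rpow (Real.rpow_nonneg hk₁.le _)
          (mul_nonneg (Real.rpow_nonneg hlmax.le _) (Real.rpow_nonneg hN.le _)),
        Real.mul_rpow (Real.rpow_nonneg hlmax.le _) (Real.rpow_nonneg hN.le _),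
        ← Real.rpow_mul hk₁.le, ← Real.rpow_mul hlmax.le, ← Real.rpow_mul hN.le,
        show -e * q = -(1/(1-α)) by rw [he, hqdef]; field_simp [show (2:ℝ)-α ≠ 0 from ne_of_gt (by linarith)]; try ring,
        show (α-1) * q = α-2 by rw [hqdef]; field_simp; try ring,
        show (1-α) * q = 2-α by rw [hqdef]; field_simp; try ring]
    rw [h1]
    have h2 : lammax ^ (α-2) ≤ lammin ^ (α-2) :=
      Real.rpow_le_rpow_of_nonpos hlmin hml (by linarith)
    have h3 : k₁ ^ (-(1/(1-α))) * (lammax ^ (α-2) * ‖u‖ ^ (2-α)) / q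
        ≤ k₁ ^ (-(1/(1-α))) * (lammin ^ (α-2) * ‖u‖ ^ (2-α)) / q := by
      gcongr
    refine h3.trans (le_of_eq ?_)
    rw [hqdef]
    field_simp
    try ring
  calc ⟪z, u⟫_ℝ / D ^ α
      ≤ ‖z‖ * ‖u‖ / (‖u‖/lammax) ^ α := step12
    _ = a * b := step3
    _ = (k₁ ^ e * a) * (k₁ ^ (-e) * b) := hsplit
    _ ≤ (k₁ ^ e * a) ^ p / p + (k₁ ^ (-e) * b) ^ q / q := hyoung
    _ ≤ k₁ / (2 - α) * lammax ^ (2 - α) * ‖z‖ ^ (2 - α) +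
        (1 - α) / (2 - α) * k₁ ^ (-(1 / (1 - α))) * lammin ^ (α - 2) * ‖u‖ ^ (2 - α) :=
      add_le_add hterm1.le hterm2
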